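/- Let F be a field, β ∈ F, and let y₁, y₂ be nonzero elements of F. Define the deformed B₃ map φ̂₂(y₁,y₂) = (((y₁+β)²y₂ + β²)/y₁, (1 + β²(y₁+1)/(y₂(y₁+β)²))/y₁), and assume y₁+β ≠ 0 and that both image coordinates are nonzero. Then the rational function K̃₂(y₁,y₂) = y₁y₂ + y₁ + (2β+1)y₂ + β(β+2)·y₂/y₁ + β²·y₂/y₁² + (2β²+2β+1)/y₁ + 1/y₂ + 2β²/y₁² + (β²+1)/(y₁y₂) + β²/(y₁²y₂) satisfies K̃₂(φ̂₂(y₁,y₂)) = K̃₂(y₁,y₂); hence φ̂₂ is a Liouville integrable map of the plane. -/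

import Mathlib

set_option maxHeartbeats 1000000

noncomputable def KtilB3₂ {F : Type*} [Field F] (β y₁ y₂ : F) : F :=
  y₁ * y₂ + y₁ + (2 * β + 1) * y₂ + β * (β + 2) * y₂ / y₁ + β ^ 2 * y₂ / y₁ ^ 2 +
    (2 * β ^ 2 + 2 * β + 1) / y₁ + 1 / y₂ + 2 * β ^ 2 / y₁ ^ 2 +
    (β ^ 2 + 1) / (y₁ * y₂) + β ^ 2 / (y₁ ^ 2 * y₂)

private lemma K_eq_div' {F : Type*} [Field F] (β x y : F) (hx : x ≠ 0) (hy : y ≠ 0) :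
    KtilB3₂ β x y =
      (x ^ 3 * y ^ 2 + x ^ 3 * y + (2 * β + 1) * x ^ 2 * y ^ 2 + β * (β + 2) * x * y ^ 2 +
        β ^ 2 * y ^ 2 + (2 * β ^ 2 + 2 * β + 1) * x * y + x ^ 2 + 2 * β ^ 2 * y +
        (β ^ 2 + 1) * x + β ^ 2) / (x ^ 2 * y) := by
  unfold KtilB3₂
  rw [eq_div_iff (mul_ne_zero (pow_ne_zero 2 hx) hy)]
  field_simp

/-- value of the numerator polynomial at `(A/x, B/w)` as a single fraction -/
private lemma N_at_frac {F : Type*} [Field F] (β A B x w : F) (hx : x ≠ 0) (hw : w ≠ 0) :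
    (A/x) ^ 3 * (B/w) ^ 2 + (A/x) ^ 3 * (B/w) + (2 * β + 1) * (A/x) ^ 2 * (B/w) ^ 2 +
      β * (β + 2) * (A/x) * (B/w) ^ 2 + β ^ 2 * (B/w) ^ 2 +
      (2 * β ^ 2 + 2 * β + 1) * (A/x) * (B/w) + (A/x) ^ 2 + 2 * β ^ 2 * (B/w) +
      (β ^ 2 + 1) * (A/x) + β ^ 2 =
    (A ^ 3 * B ^ 2 + A ^ 3 * B * w + (2 * β + 1) * A ^ 2 * B ^ 2 * x +
      β * (β + 2) * A * B ^ 2 * x ^ 2 + β ^ 2 * B ^ 2 * x ^ 3 +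
      (2 * β ^ 2 + 2 * β + 1) * A * B * x ^ 2 * w + A ^ 2 * x * w ^ 2 +
      2 * β ^ 2 * B * x ^ 3 * w + (β ^ 2 + 1) * A * x ^ 2 * w ^ 2 + β ^ 2 * x ^ 3 * w ^ 2) /
      (x ^ 3 * w ^ 2) := by
  have hd : x ^ 3 * w ^ 2 ≠ 0 := mul_ne_zero (pow_ne_zero 3 hx) (pow_ne_zero 2 hw)
  have t1 : (A/x) ^ 3 * (B/w) ^ 2 = A ^ 3 * B ^ 2 / (x ^ 3 * w ^ 2) := by
    rw [div_pow, div_pow, div_mul_div_comm]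
  have t2 : (A/x) ^ 3 * (B/w) = A ^ 3 * B * w / (x ^ 3 * w ^ 2) := by
    rw [div_pow, div_mul_div_comm, div_eq_div_iff (mul_ne_zero (pow_ne_zero 3 hx) hw) hd]
    ring
  have t3 : (2 * β + 1) * (A/x) ^ 2 * (B/w) ^ 2 = (2 * β + 1) * A ^ 2 * B ^ 2 * x / (x ^ 3 * w ^ 2) := by
    rw [mul_assoc, div_pow, div_pow, div_mul_div_comm, mul_div_assoc',
      div_eq_div_iff (mul_ne_zero (pow_ne_zero 2 hx) (pow_ne_zero 2 hw)) hd]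
    ring
  have t4 : β * (β + 2) * (A/x) * (B/w) ^ 2 = β * (β + 2) * A * B ^ 2 * x ^ 2 / (x ^ 3 * w ^ 2) := by
    rw [mul_assoc, div_pow, div_mul_div_comm, mul_div_assoc',
      div_eq_div_iff (mul_ne_zero hx (pow_ne_zero 2 hw)) hd]
    ring
  have t5 : β ^ 2 * (B/w) ^ 2 = β ^ 2 * B ^ 2 * x ^ 3 / (x ^ 3 * w ^ 2) := by
    rw [div_pow, mul_div_assoc', div_eq_div_iff (pow_ne_zero 2 hw) hd]
    ring
  have t6 : (2 * β ^ 2 + 2 * β + 1) * (A/x) * (B/w)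
      = (2 * β ^ 2 + 2 * β + 1) * A * B * x ^ 2 * w / (x ^ 3 * w ^ 2) := by
    rw [mul_assoc, div_mul_div_comm, mul_div_assoc',
      div_eq_div_iff (mul_ne_zero hx hw) hd]
    ring
  have t7 : (A/x) ^ 2 = A ^ 2 * x * w ^ 2 / (x ^ 3 * w ^ 2) := by
    rw [div_pow, div_eq_div_iff (pow_ne_zero 2 hx) hd]
    ring
  have t8 : 2 * β ^ 2 * (B/w) = 2 * β ^ 2 * B * x ^ 3 * w / (x ^ 3 * w ^ 2) := by
    rw [mul_div_assoc', div_eq_div_iff hw hd]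
    ring
  have t9 : (β ^ 2 + 1) * (A/x) = (β ^ 2 + 1) * A * x ^ 2 * w ^ 2 / (x ^ 3 * w ^ 2) := by
    rw [mul_div_assoc', div_eq_div_iff hx hd]
    ring
  have t10 : (β ^ 2 : F) = β ^ 2 * x ^ 3 * w ^ 2 / (x ^ 3 * w ^ 2) := by
    rw [eq_div_iff hd]
    ring
  rw [t1, t2, t3, t4, t5, t6, t7, t8, t9]
  simp only [add_div]
  rw [← t10]

theorem deformed_B3_map2_first_integral {F : Type*} [Field F] (β y₁ y₂ : F)
    (h₁ : y₁ ≠ 0) (h₂ : y₂ ≠ 0) (hβ : y₁ + β ≠ 0)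
    (him₁ : ((y₁ + β) ^ 2 * y₂ + β ^ 2) / y₁ ≠ 0)
    (him₂ : (1 + β ^ 2 * (y₁ + 1) / (y₂ * (y₁ + β) ^ 2)) / y₁ ≠ 0) :
    KtilB3₂ β (((y₁ + β) ^ 2 * y₂ + β ^ 2) / y₁)
        ((1 + β ^ 2 * (y₁ + 1) / (y₂ * (y₁ + β) ^ 2)) / y₁) =
      KtilB3₂ β y₁ y₂ := by
  have hw : y₁ * y₂ * (y₁ + β) ^ 2 ≠ 0 :=
    mul_ne_zero (mul_ne_zero h₁ h₂) (pow_ne_zero 2 hβ)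
  have hb : (1 + β ^ 2 * (y₁ + 1) / (y₂ * (y₁ + β) ^ 2)) / y₁
      = (y₂ * (y₁ + β) ^ 2 + β ^ 2 * (y₁ + 1)) / (y₁ * y₂ * (y₁ + β) ^ 2) := by
    rw [div_eq_div_iff h₁ hw]
    field_simp
  rw [hb] at him₂ ⊢
  have hA : (y₁ + β) ^ 2 * y₂ + β ^ 2 ≠ 0 := by
    intro h; exact him₁ (by rw [h]; simp)
  have hB : y₂ * (y₁ + β) ^ 2 + β ^ 2 * (y₁ + 1) ≠ 0 := by
    intro h; exact him₂ (by rw [h]; simp)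
  rw [K_eq_div' β _ _ him₁ him₂, K_eq_div' β y₁ y₂ h₁ h₂,
    N_at_frac β _ _ _ _ h₁ hw, div_pow, div_mul_div_comm]
  rw [div_div_eq_mul_div, div_mul_eq_mul_div, div_div]
  rw [div_eq_div_iff
    (mul_ne_zero (mul_ne_zero (pow_ne_zero 3 h₁) (pow_ne_zero 2 hw))
      (mul_ne_zero (pow_ne_zero 2 hA) hB))
    (mul_ne_zero (pow_ne_zero 2 h₁) h₂)]
  ring
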